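/- Let X be an order-N real tensor of shape (I_1,…,I_N). For every core shape r = (R_1,…,R_N) with 1 ≤ R_n ≤ I_n, we have (1/N)·L̃(X,r) ≤ L(X,r) ≤ L̃(X,r), where L̃(X,r) = Σ_{n=1}^N Σ_{i=R_n+1}^{I_n} (σ_i^(n))² is the surrogate loss. -/

import Mathlib

open scoped BigOperators
open Matrix

/-- Combine a fixed `n`-th coordinate with coordinates for the remaining modes. -/
def fullIdx {N : ℕ} {I : Fin N → ℕ} (n : Fin N) (i : Fin (I n))
    (j : ∀ m : {m : Fin N // m ≠ n}, Fin (I m.1)) : ∀ k, Fin (I k) :=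
  fun k => if h : k = n then Fin.cast (congrArg I h).symm i else j ⟨k, h⟩

/-- Mode-`n` unfolding of a tensor. -/
def modeUnfold {N : ℕ} {I : Fin N → ℕ} (X : (∀ k, Fin (I k)) → ℝ) (n : Fin N) :
    Matrix (Fin (I n)) (∀ m : {m : Fin N // m ≠ n}, Fin (I m.1)) ℝ :=
  fun i j => X (fullIdx n i j)

/-- Squared Frobenius norm of a tensor. -/
noncomputable def frobSq {N : ℕ} {I : Fin N → ℕ} (X : (∀ k, Fin (I k)) → ℝ) : ℝ :=
  ∑ i : ∀ k, Fin (I k), (X i) ^ 2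

/-- Tucker/multilinear reconstruction `G ×₁ A 1 ×₂ ⋯ ×_N A N`. -/
noncomputable def tucker {N : ℕ} {I R : Fin N → ℕ} (G : (∀ k, Fin (R k)) → ℝ)
    (A : ∀ n, Matrix (Fin (I n)) (Fin (R n)) ℝ) : (∀ k, Fin (I k)) → ℝ :=
  fun i => ∑ j : ∀ k, Fin (R k), G j * ∏ n, A n (i n) (j n)

/-- Optimal rank-`R` Tucker loss `L(X, R)`. -/
noncomputable def tuckerLoss {N : ℕ} (I : Fin N → ℕ) (X : (∀ k, Fin (I k)) → ℝ)
    (R : Fin N → ℕ) : ℝ :=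
  sInf {v : ℝ | ∃ (G : (∀ k, Fin (R k)) → ℝ)
    (A : ∀ n, Matrix (Fin (I n)) (Fin (R n)) ℝ),
    v = frobSq (fun i => X i - tucker G A i)}

/-- `σ` lists the singular values of `M` in nonincreasing order:
entries are nonnegative, nonincreasing, and their squares are the eigenvalues
of the positive semidefinite matrix `M * Mᵀ` (up to a permutation). -/
def IsSingularValues {k : ℕ} {c : Type*} [Fintype c]
    (M : Matrix (Fin k) c ℝ) (σ : Fin k → ℝ) : Prop :=
  (∀ i, 0 ≤ σ i) ∧ Antitone σ ∧
    ∃ e : Equiv.Perm (Fin k), ∀ i, σ i ^ 2 =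
      (Matrix.isHermitian_mul_conjTranspose_self M).eigenvalues (e i)

/-- Truncation of a tensor to the leading `R`-block. -/
def truncate {N : ℕ} {I : Fin N → ℕ} (S : (∀ k, Fin (I k)) → ℝ)
    (R : Fin N → ℕ) : (∀ k, Fin (I k)) → ℝ :=
  fun i => if ∀ n, (i n : ℕ) < R n then S i else 0

/-- Surrogate loss `L̃(X, R)`: sum of the squared tail singular values. -/
noncomputable def surrLoss {N : ℕ} {I : Fin N → ℕ} (σ : ∀ n, Fin (I n) → ℝ)
    (R : Fin N → ℕ) : ℝ :=
  ∑ n, ∑ i ∈ Finset.univ.filter (fun i : Fin (I n) => R n ≤ (i : ℕ)), σ n i ^ 2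

/-- Packing objective: sum of the squared leading singular values. -/
noncomputable def packObj {N : ℕ} {I : Fin N → ℕ} (σ : ∀ n, Fin (I n) → ℝ)
    (R : Fin N → ℕ) : ℝ :=
  ∑ n, ∑ i ∈ Finset.univ.filter (fun i : Fin (I n) => (i : ℕ) < R n), σ n i ^ 2


variable {N : ℕ} {I : Fin N → ℕ}

@[simp] lemma fullIdx_same (n : Fin N) (i : Fin (I n)) (j) : fullIdx (I := I) n i j n = i := by
  simp [fullIdx]

@[simp] lemma fullIdx_ne (n : Fin N) (i : Fin (I n)) (j) (m : {m : Fin N // m ≠ n}) :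
    fullIdx (I := I) n i j m.1 = j m := by
  simp [fullIdx, m.2]

lemma fullIdx_restrict (n : Fin N) (i : Fin (I n)) (j) :
    (fun m : {m : Fin N // m ≠ n} => fullIdx (I := I) n i j m.1) = j := by
  funext m; exact fullIdx_ne n i j m

def idxEquiv (n : Fin N) :
    (∀ k, Fin (I k)) ≃ Fin (I n) × (∀ m : {m : Fin N // m ≠ n}, Fin (I m.1)) where
  toFun i := (i n, fun m => i m.1)
  invFun p := fullIdx n p.1 p.2
  left_inv i := by
    funext k
    by_cases h : k = n
    · subst h; simp [fullIdx]
    · simp [fullIdx, h]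
  right_inv p := by
    obtain ⟨a, j⟩ := p
    refine Prod.ext ?_ ?_
    · exact fullIdx_same n a j
    · exact fullIdx_restrict n a j

lemma sum_idx (n : Fin N) (f : (∀ k, Fin (I k)) → ℝ) :
    ∑ i, f i = ∑ a : Fin (I n), ∑ j, f (fullIdx n a j) := by
  rw [← Equiv.sum_comp (idxEquiv (I := I) n).symm f, Fintype.sum_prod_type]
  rfl

/-- Squared Frobenius norm of a matrix. -/
noncomputable def mfrob {α β : Type*} [Fintype α] [Fintype β] (M : Matrix α β ℝ) : ℝ :=
  ∑ a, ∑ b, M a b ^ 2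

lemma mfrob_eq_trace {α β : Type*} [Fintype α] [Fintype β] (M : Matrix α β ℝ) :
    mfrob M = (M * Mᵀ).trace := by
  simp [mfrob, Matrix.trace, Matrix.mul_apply, Matrix.diag, sq]

lemma frobSq_unfold (n : Fin N) (X : (∀ k, Fin (I k)) → ℝ) :
    frobSq X = mfrob (modeUnfold X n) := by
  rw [frobSq, sum_idx n]; rfl

lemma mfrob_nonneg {α β : Type*} [Fintype α] [Fintype β] (M : Matrix α β ℝ) : 0 ≤ mfrob M :=
  Finset.sum_nonneg fun _ _ => Finset.sum_nonneg fun _ _ => sq_nonneg _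

lemma frobSq_nonneg (X : (∀ k, Fin (I k)) → ℝ) : 0 ≤ frobSq X :=
  Finset.sum_nonneg fun _ _ => sq_nonneg _

/-- Apply matrix `P` along mode `n`. -/
noncomputable def modeProd (n : Fin N) (P : Matrix (Fin (I n)) (Fin (I n)) ℝ)
    (X : (∀ k, Fin (I k)) → ℝ) : (∀ k, Fin (I k)) → ℝ :=
  fun i => ∑ a, P (i n) a * X (fullIdx n a (fun m => i m.1))

lemma unfold_modeProd (n : Fin N) (P : Matrix (Fin (I n)) (Fin (I n)) ℝ)
    (X : (∀ k, Fin (I k)) → ℝ) :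
    modeUnfold (modeProd n P X) n = P * modeUnfold X n := by
  funext i j
  simp only [modeUnfold, modeProd, Matrix.mul_apply, fullIdx_same, fullIdx_restrict]

lemma modeUnfold_sub (n : Fin N) (X Y : (∀ k, Fin (I k)) → ℝ) :
    modeUnfold (fun i => X i - Y i) n = modeUnfold X n - modeUnfold Y n := rfl

lemma trace_proj {α β : Type*} [Fintype α] [Fintype β]
    (P : Matrix α α ℝ) (hs : Pᵀ = P) (hi : P * P = P) (B : Matrix α β ℝ) :
    (P * B * (P * B)ᵀ).trace = (P * B * Bᵀ).trace := by
  rw [Matrix.transpose_mul, hs]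
  calc (P * B * (Bᵀ * P)).trace
      = ((Bᵀ * P) * (P * B)).trace := by rw [Matrix.trace_mul_comm]
    _ = (Bᵀ * (P * (P * B))).trace := by rw [Matrix.mul_assoc]
    _ = (Bᵀ * (P * B)).trace := by rw [← Matrix.mul_assoc P P B, hi]
    _ = ((P * B) * Bᵀ).trace := by rw [Matrix.trace_mul_comm]

/-- Pythagoras for a symmetric idempotent `P`. -/
lemma mfrob_pyth {α β : Type*} [Fintype α] [Fintype β]
    (P : Matrix α α ℝ) (hs : Pᵀ = P) (hi : P * P = P) (M : Matrix α β ℝ) :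
    mfrob M = mfrob (P * M) + mfrob (M - P * M) := by
  have e1 : (M - P * M) * (M - P * M)ᵀ
      = M * Mᵀ - M * (P * M)ᵀ - P * M * Mᵀ + P * M * (P * M)ᵀ := by
    rw [Matrix.transpose_sub, Matrix.sub_mul, Matrix.mul_sub, Matrix.mul_sub]
    abel
  have e2 : (M * (P * M)ᵀ).trace = (P * M * Mᵀ).trace := by
    rw [← Matrix.trace_transpose (M * (P * M)ᵀ), Matrix.transpose_mul,
      Matrix.transpose_transpose]
  have e3 : (P * M * (P * M)ᵀ).trace = (P * M * Mᵀ).trace := trace_proj P hs hi M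
  rw [mfrob_eq_trace, mfrob_eq_trace, mfrob_eq_trace, e1]
  rw [Matrix.trace_add, Matrix.trace_sub, Matrix.trace_sub, e2, e3]
  ring

lemma mfrob_add_cross {α β : Type*} [Fintype α] [Fintype β] (A B : Matrix α β ℝ)
    (h : (A * Bᵀ).trace = 0) : mfrob (A + B) = mfrob A + mfrob B := by
  have hBA : (B * Aᵀ).trace = 0 := by
    rw [← Matrix.trace_transpose (B * Aᵀ), Matrix.transpose_mul, Matrix.transpose_transpose]
    exact h
  have e : (A + B) * (A + B)ᵀ = A * Aᵀ + A * Bᵀ + B * Aᵀ + B * Bᵀ := by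
    rw [Matrix.transpose_add, Matrix.add_mul, Matrix.mul_add, Matrix.mul_add]
    abel
  rw [mfrob_eq_trace, mfrob_eq_trace, mfrob_eq_trace, e, Matrix.trace_add, Matrix.trace_add,
    Matrix.trace_add, h, hBA]
  ring

lemma mfrob_step {α β : Type*} [Fintype α] [Fintype β]
    (P : Matrix α α ℝ) (hs : Pᵀ = P) (hi : P * P = P) (M Z : Matrix α β ℝ) :
    mfrob (M - P * Z) = mfrob (M - P * M) + mfrob (P * (M - Z)) := by
  have hM : M - P * Z = (M - P * M) + P * (M - Z) := by rw [Matrix.mul_sub]; abel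
  have hzero : P * (M - P * M) = 0 := by
    rw [Matrix.mul_sub, ← Matrix.mul_assoc, hi, sub_self]
  have cross : ((M - P * M) * (P * (M - Z))ᵀ).trace = 0 := by
    rw [Matrix.transpose_mul, hs, ← Matrix.mul_assoc, Matrix.trace_mul_cycle,
      hzero, Matrix.zero_mul, Matrix.trace_zero]
  rw [hM, mfrob_add_cross _ _ cross]

noncomputable def phiList (P : ∀ n, Matrix (Fin (I n)) (Fin (I n)) ℝ) :
    List (Fin N) → ((∀ k, Fin (I k)) → ℝ) → ((∀ k, Fin (I k)) → ℝ)
  | [], X => X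
  | n :: l, X => modeProd n (P n) (phiList P l X)

lemma frobSq_modeProd_le (n : Fin N) (P : Matrix (Fin (I n)) (Fin (I n)) ℝ)
    (hs : Pᵀ = P) (hi : P * P = P) (W : (∀ k, Fin (I k)) → ℝ) :
    frobSq (modeProd n P W) ≤ frobSq W := by
  rw [frobSq_unfold n, frobSq_unfold n, unfold_modeProd]
  have := mfrob_pyth P hs hi (modeUnfold W n)
  have h2 := mfrob_nonneg (modeUnfold W n - P * modeUnfold W n)
  linarith

lemma err_bound (P : ∀ n, Matrix (Fin (I n)) (Fin (I n)) ℝ)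
    (hs : ∀ n, (P n)ᵀ = P n) (hi : ∀ n, P n * P n = P n) (X : (∀ k, Fin (I k)) → ℝ) :
    ∀ l : List (Fin N),
      frobSq (fun i => X i - phiList P l X i)
        ≤ (l.map (fun n => frobSq (fun i => X i - modeProd n (P n) X i))).sum := by
  intro l
  induction l with
  | nil => simp [phiList, frobSq]
  | cons n l ih =>
    set Z := phiList P l X with hZ
    have hstep : frobSq (fun i => X i - modeProd n (P n) Z i)
        = frobSq (fun i => X i - modeProd n (P n) X i)
          + frobSq (modeProd n (P n) (fun i => X i - Z i)) := by
      rw [frobSq_unfold n, frobSq_unfold n, frobSq_unfold n,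
        modeUnfold_sub, modeUnfold_sub, unfold_modeProd, unfold_modeProd, unfold_modeProd,
        modeUnfold_sub n X Z]
      exact mfrob_step (P n) (hs n) (hi n) (modeUnfold X n) (modeUnfold Z n)
    have hle := frobSq_modeProd_le n (P n) (hs n) (hi n) (fun i => X i - Z i)
    calc frobSq (fun i => X i - phiList P (n :: l) X i)
        = frobSq (fun i => X i - modeProd n (P n) X i)
          + frobSq (modeProd n (P n) (fun i => X i - Z i)) := hstep
      _ ≤ frobSq (fun i => X i - modeProd n (P n) X i) + frobSq (fun i => X i - Z i) := by
          linarith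
      _ ≤ _ := by
          rw [List.map_cons, List.sum_cons]
          exact add_le_add (le_refl _) ih

/-- Kernel form of iterated mode products. -/
noncomputable def kerApply (P : ∀ n, Matrix (Fin (I n)) (Fin (I n)) ℝ) (l : List (Fin N))
    (X : (∀ k, Fin (I k)) → ℝ) : (∀ k, Fin (I k)) → ℝ :=
  fun i => ∑ g : ∀ k, Fin (I k),
    (∏ n, if n ∈ l then P n (i n) (g n) else if i n = g n then 1 else 0) * X g

lemma kerApply_nil (P : ∀ n, Matrix (Fin (I n)) (Fin (I n)) ℝ) (X : (∀ k, Fin (I k)) → ℝ) :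
    kerApply P [] X = X := by
  funext i
  rw [kerApply, Finset.sum_eq_single i]
  · simp
  · intro g _ hg
    have : ∃ n, ¬ i n = g n := by
      by_contra h
      push_neg at h
      exact hg (funext fun n => (h n)).symm
    obtain ⟨n, hn⟩ := this
    rw [Finset.prod_eq_zero (Finset.mem_univ n) (by simp [hn]), zero_mul]
  · intro h; exact absurd (Finset.mem_univ i) h

lemma kerApply_cons (P : ∀ n, Matrix (Fin (I n)) (Fin (I n)) ℝ) (n : Fin N) (l : List (Fin N))
    (hn : n ∉ l) (X : (∀ k, Fin (I k)) → ℝ) :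
    modeProd n (P n) (kerApply P l X) = kerApply P (n :: l) X := by
  funext i
  rw [modeProd]
  have hsplit : ∀ (i' : ∀ k, Fin (I k)) (l' : List (Fin N)) (g : ∀ k, Fin (I k)),
      (∏ m, if m ∈ l' then P m (i' m) (g m) else if i' m = g m then (1:ℝ) else 0)
      = (if n ∈ l' then P n (i' n) (g n) else if i' n = g n then 1 else 0)
        * ∏ m ∈ Finset.univ.erase n,
            (if m ∈ l' then P m (i' m) (g m) else if i' m = g m then 1 else 0) := by
    intro i' l' g
    exact (Finset.mul_prod_erase Finset.univ _ (Finset.mem_univ n)).symm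
  have hrest : ∀ (a : Fin (I n)) (g : ∀ k, Fin (I k)),
      (∏ m ∈ Finset.univ.erase n, (if m ∈ l then
          P m ((fullIdx n a (fun m' => i m'.1)) m) (g m)
        else if (fullIdx n a (fun m' => i m'.1)) m = g m then (1:ℝ) else 0))
      = ∏ m ∈ Finset.univ.erase n, (if m ∈ n :: l then P m (i m) (g m)
          else if i m = g m then 1 else 0) := by
    intro a g
    refine Finset.prod_congr rfl ?_
    intro m hm
    have hmn : m ≠ n := Finset.ne_of_mem_erase hm
    have hfe : fullIdx n a (fun m' => i m'.1) m = i m := fullIdx_ne n a _ ⟨m, hmn⟩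
    rw [hfe]
    simp only [List.mem_cons, hmn, false_or]
  calc (∑ a, P n (i n) a * kerApply P l X (fullIdx n a (fun m => i m.1)))
      = ∑ a, ∑ g, P n (i n) a * ((if a = g n then 1 else 0)
          * ((∏ m ∈ Finset.univ.erase n, (if m ∈ n :: l then P m (i m) (g m)
              else if i m = g m then 1 else 0)) * X g)) := by
        refine Finset.sum_congr rfl ?_
        intro a _
        rw [kerApply, Finset.mul_sum]
        refine Finset.sum_congr rfl ?_
        intro g _
        rw [hsplit, hrest a g, if_neg hn, fullIdx_same]
        ring
    _ = ∑ g, (∑ a, P n (i n) a * if a = g n then 1 else 0)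
          * ((∏ m ∈ Finset.univ.erase n, (if m ∈ n :: l then P m (i m) (g m)
              else if i m = g m then 1 else 0)) * X g) := by
        rw [Finset.sum_comm]
        refine Finset.sum_congr rfl fun g _ => ?_
        rw [Finset.sum_mul]
        refine Finset.sum_congr rfl fun a _ => ?_
        ring
    _ = ∑ g, (∏ m, if m ∈ n :: l then P m (i m) (g m) else if i m = g m then 1 else 0) * X g := by
        refine Finset.sum_congr rfl fun g _ => ?_
        rw [hsplit i (n :: l) g, if_pos (List.mem_cons_self (a := n) (l := l))]
        have : (∑ a, P n (i n) a * if a = g n then (1:ℝ) else 0) = P n (i n) (g n) := by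
          simp
        rw [this, mul_assoc]
    _ = kerApply P (n :: l) X i := rfl

lemma phiList_eq_kerApply (P : ∀ n, Matrix (Fin (I n)) (Fin (I n)) ℝ)
    (l : List (Fin N)) (hl : l.Nodup) (X : (∀ k, Fin (I k)) → ℝ) :
    phiList P l X = kerApply P l X := by
  induction l with
  | nil => rw [kerApply_nil]; rfl
  | cons n l ih =>
    have hn : n ∉ l := (List.nodup_cons.mp hl).1
    have hl' : l.Nodup := (List.nodup_cons.mp hl).2
    show modeProd n (P n) (phiList P l X) = _
    rw [ih hl', kerApply_cons P n l hn]

lemma kerApply_finRange (P : ∀ n, Matrix (Fin (I n)) (Fin (I n)) ℝ)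
    (X : (∀ k, Fin (I k)) → ℝ) (i : ∀ k, Fin (I k)) :
    kerApply P (List.finRange N) X i = ∑ g : ∀ k, Fin (I k), (∏ n, P n (i n) (g n)) * X g := by
  simp [kerApply, List.mem_finRange]

lemma tucker_hosvd {R : Fin N → ℕ} (A : ∀ n, Matrix (Fin (I n)) (Fin (R n)) ℝ)
    (X : (∀ k, Fin (I k)) → ℝ) :
    tucker (fun j => ∑ g : ∀ k, Fin (I k), X g * ∏ n, A n (g n) (j n)) A
      = kerApply (fun n => A n * (A n)ᵀ) (List.finRange N) X := by
  funext i
  rw [tucker]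
  rw [kerApply_finRange]
  calc ∑ j : ∀ k, Fin (R k), (∑ g : ∀ k, Fin (I k), X g * ∏ n, A n (g n) (j n))
          * ∏ n, A n (i n) (j n)
      = ∑ g : ∀ k, Fin (I k), X g
          * ∑ j : ∀ k, Fin (R k), ∏ n, (A n (i n) (j n) * A n (g n) (j n)) := by
        simp only [Finset.sum_mul]
        rw [Finset.sum_comm]
        refine Finset.sum_congr rfl fun g _ => ?_
        rw [Finset.mul_sum]
        refine Finset.sum_congr rfl fun j _ => ?_
        rw [Finset.prod_mul_distrib]
        ring
    _ = ∑ g : ∀ k, Fin (I k), (∏ n, (A n * (A n)ᵀ) (i n) (g n)) * X g := by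
        refine Finset.sum_congr rfl fun g _ => ?_
        have h : (∑ j : ∀ k, Fin (R k), ∏ n, (A n (i n) (j n) * A n (g n) (j n)))
            = ∏ n, ∑ r : Fin (R n), A n (i n) r * A n (g n) r :=
          (Fintype.prod_sum (fun n r => A n (i n) r * A n (g n) r)).symm
        rw [h, mul_comm]
        refine congrArg (· * X g) ?_
        refine Finset.prod_congr rfl fun n _ => ?_
        rw [Matrix.mul_apply]
        rfl

section spectral

variable {k : ℕ} {S : Matrix (Fin k) (Fin k) ℝ} (hS : S.IsHermitian)

lemma onb_sums (j j' : Fin k) :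
    ∑ a, hS.eigenvectorBasis j a * hS.eigenvectorBasis j' a = if j = j' then 1 else 0 := by
  have h := orthonormal_iff_ite.mp hS.eigenvectorBasis.orthonormal j j'
  simp [PiLp.inner_apply, RCLike.inner_apply, starRingEnd_apply] at h
  rw [← h]
  exact Finset.sum_congr rfl fun _ _ => mul_comm _ _

lemma spec_entry (a b : Fin k) :
    S a b = ∑ j, hS.eigenvalues j * (hS.eigenvectorBasis j a * hS.eigenvectorBasis j b) := by
  conv_lhs => rw [hS.spectral_theorem, Unitary.conjStarAlgAut_apply]
  simp only [Matrix.mul_apply, Matrix.diagonal_apply, Function.comp_apply,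
    Matrix.star_apply, Matrix.IsHermitian.eigenvectorUnitary_apply, star_trivial]
  simp only [mul_ite, mul_zero, Finset.sum_ite_eq, Finset.sum_ite_eq', Finset.mem_univ, if_true]
  refine Finset.sum_congr rfl fun j _ => ?_
  have hW : ∀ (x : EuclideanSpace ℝ (Fin k)) (c : Fin k),
      (WithLp.equiv 2 (Fin k → ℝ)) x c = x c := fun _ _ => rfl
  have hR : ∀ x : ℝ, (RCLike.ofReal x : ℝ) = x := fun _ => rfl
  simp only [hW, hR]
  ring

lemma trace_eq_sum_eigenvalues : S.trace = ∑ j, hS.eigenvalues j := by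
  have : S.trace = ∑ a, S a a := rfl
  rw [this]
  calc ∑ a, S a a
      = ∑ a, ∑ j, hS.eigenvalues j * (hS.eigenvectorBasis j a * hS.eigenvectorBasis j a) := by
        exact Finset.sum_congr rfl fun a _ => spec_entry hS a a
    _ = ∑ j, hS.eigenvalues j * ∑ a, hS.eigenvectorBasis j a * hS.eigenvectorBasis j a := by
        rw [Finset.sum_comm]
        exact Finset.sum_congr rfl fun j _ => by rw [Finset.mul_sum]
    _ = ∑ j, hS.eigenvalues j := by
        refine Finset.sum_congr rfl fun j _ => ?_
        rw [onb_sums hS j j, if_pos rfl, mul_one]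

lemma quad_form (w : Fin k → ℝ) :
    ∑ a, ∑ b, w a * S a b * w b
      = ∑ j, hS.eigenvalues j * (∑ a, hS.eigenvectorBasis j a * w a) ^ 2 := by
  calc ∑ a, ∑ b, w a * S a b * w b
      = ∑ a, ∑ b, ∑ j, hS.eigenvalues j
          * ((hS.eigenvectorBasis j a * w a) * (hS.eigenvectorBasis j b * w b)) := by
        refine Finset.sum_congr rfl fun a _ => Finset.sum_congr rfl fun b _ => ?_
        rw [spec_entry hS a b, Finset.mul_sum, Finset.sum_mul]
        exact Finset.sum_congr rfl fun j _ => by ring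
    _ = ∑ a, ∑ j, ∑ b, hS.eigenvalues j
          * ((hS.eigenvectorBasis j a * w a) * (hS.eigenvectorBasis j b * w b)) :=
        Finset.sum_congr rfl fun _ _ => Finset.sum_comm
    _ = ∑ j, ∑ a, ∑ b, hS.eigenvalues j
          * ((hS.eigenvectorBasis j a * w a) * (hS.eigenvectorBasis j b * w b)) :=
        Finset.sum_comm
    _ = ∑ j, hS.eigenvalues j * (∑ a, hS.eigenvectorBasis j a * w a) ^ 2 := by
        refine Finset.sum_congr rfl fun j _ => ?_
        rw [sq, Finset.sum_mul_sum]
        rw [Finset.mul_sum]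
        exact Finset.sum_congr rfl fun a _ => by rw [Finset.mul_sum]

end spectral

lemma map_castLE_eq_filter {m Rn : ℕ} (h : Rn ≤ m) :
    (Finset.univ.map (Fin.castLEEmb h)) = Finset.univ.filter (fun i : Fin m => (i : ℕ) < Rn) := by
  ext i
  simp only [Finset.mem_map, Finset.mem_univ, true_and, Finset.mem_filter]
  constructor
  · rintro ⟨r, rfl⟩; exact r.2
  · intro hi; exact ⟨⟨i.1, hi⟩, rfl⟩

lemma sum_filter_lt {m : ℕ} {Rn : ℕ} (h : Rn ≤ m) (f : Fin m → ℝ) :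
    ∑ i ∈ Finset.univ.filter (fun i : Fin m => (i : ℕ) < Rn), f i
      = ∑ r : Fin Rn, f (Fin.castLE h r) := by
  rw [← map_castLE_eq_filter h, Finset.sum_map]
  rfl

/-- The surrogate-loss tail for one mode. -/
lemma mode_upper (n : Fin N) (X : (∀ k, Fin (I k)) → ℝ) (σn : Fin (I n) → ℝ)
    (hpos : ∀ i, 0 ≤ σn i)
    (e : Equiv.Perm (Fin (I n)))
    (he : ∀ i, σn i ^ 2 =
      (Matrix.isHermitian_mul_conjTranspose_self (modeUnfold X n)).eigenvalues (e i))
    (Rn : ℕ) (hRn : Rn ≤ I n) :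
    ∃ A : Matrix (Fin (I n)) (Fin Rn) ℝ,
      (A * Aᵀ)ᵀ = A * Aᵀ ∧ (A * Aᵀ) * (A * Aᵀ) = A * Aᵀ ∧
      frobSq (fun i => X i - modeProd n (A * Aᵀ) X i)
        = ∑ i ∈ Finset.univ.filter (fun i : Fin (I n) => Rn ≤ (i : ℕ)), σn i ^ 2 := by
  set M := modeUnfold X n with hM
  set hH := Matrix.isHermitian_mul_conjTranspose_self M with hHdef
  set u := hH.eigenvectorBasis with hu
  set lam := hH.eigenvalues with hlam
  have hMS : M * Mᴴ = M * Mᵀ := by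
    rw [Matrix.conjTranspose_eq_transpose_of_trivial]
  set A : Matrix (Fin (I n)) (Fin Rn) ℝ := fun a r => u (e (Fin.castLE hRn r)) a with hA
  have hAtA : Aᵀ * A = 1 := by
    ext r r'
    rw [Matrix.mul_apply, Matrix.one_apply]
    have : ∑ a, Aᵀ r a * A a r' = ∑ a, u (e (Fin.castLE hRn r)) a * u (e (Fin.castLE hRn r')) a :=
      rfl
    rw [this, onb_sums hH]
    by_cases hrr : r = r'
    · simp [hrr]
    · have : ¬ (e (Fin.castLE hRn r) = e (Fin.castLE hRn r')) := by
        intro hcontra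
        exact hrr (Fin.castLE_injective hRn (e.injective hcontra))
      simp [hrr, this]
  have hsym : (A * Aᵀ)ᵀ = A * Aᵀ := by
    rw [Matrix.transpose_mul, Matrix.transpose_transpose]
  have hidem : (A * Aᵀ) * (A * Aᵀ) = A * Aᵀ := by
    rw [Matrix.mul_assoc, ← Matrix.mul_assoc Aᵀ A, hAtA, Matrix.one_mul]
  refine ⟨A, hsym, hidem, ?_⟩
  set P := A * Aᵀ with hP
  -- trace of P * (M * Mᵀ)
  have htracePS : (P * M * Mᵀ).trace = ∑ r : Fin Rn, lam (e (Fin.castLE hRn r)) := by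
    have hPS : ∀ a c, (P * M * Mᵀ) a c
        = ∑ b, (∑ r : Fin Rn, u (e (Fin.castLE hRn r)) a * u (e (Fin.castLE hRn r)) b)
            * (M * Mᵀ) b c := by
      intro a c
      rw [Matrix.mul_assoc, Matrix.mul_apply]
      rfl
    calc (P * M * Mᵀ).trace
        = ∑ a, ∑ b, (∑ r : Fin Rn, u (e (Fin.castLE hRn r)) a * u (e (Fin.castLE hRn r)) b)
            * (M * Mᵀ) b a := Finset.sum_congr rfl fun a _ => hPS a a
      _ = ∑ a, ∑ b, ∑ r : Fin Rn, u (e (Fin.castLE hRn r)) a * (M * Mᴴ) a b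
            * u (e (Fin.castLE hRn r)) b := by
          refine Finset.sum_congr rfl fun a _ => Finset.sum_congr rfl fun b _ => ?_
          rw [Finset.sum_mul]
          refine Finset.sum_congr rfl fun r _ => ?_
          have hsab : (M * Mᵀ) b a = (M * Mᴴ) a b := by
            rw [hMS, Matrix.mul_apply, Matrix.mul_apply]
            refine Finset.sum_congr rfl fun c _ => ?_
            rw [Matrix.transpose_apply, Matrix.transpose_apply]
            ring
          rw [hsab]
          ring
      _ = ∑ a, ∑ r : Fin Rn, ∑ b, u (e (Fin.castLE hRn r)) a * (M * Mᴴ) a b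
            * u (e (Fin.castLE hRn r)) b :=
          Finset.sum_congr rfl fun _ _ => Finset.sum_comm
      _ = ∑ r : Fin Rn, ∑ a, ∑ b, u (e (Fin.castLE hRn r)) a * (M * Mᴴ) a b
            * u (e (Fin.castLE hRn r)) b := Finset.sum_comm
      _ = ∑ r : Fin Rn, lam (e (Fin.castLE hRn r)) := by
          refine Finset.sum_congr rfl fun r _ => ?_
          rw [quad_form hH (u (e (Fin.castLE hRn r)))]
          rw [Finset.sum_eq_single (e (Fin.castLE hRn r))]
          · rw [onb_sums hH]
            simp
            rfl
          · intro j _ hj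
            rw [onb_sums hH]
            simp [hj]
          · intro h; exact absurd (Finset.mem_univ _) h
  -- assemble
  have h1 : frobSq (fun i => X i - modeProd n P X i) = mfrob (M - P * M) := by
    rw [frobSq_unfold n, modeUnfold_sub, unfold_modeProd]
  have h2 : mfrob M = mfrob (P * M) + mfrob (M - P * M) := mfrob_pyth P hsym hidem M
  have h3 : mfrob M = ∑ j, lam j := by
    rw [mfrob_eq_trace, ← hMS]
    exact trace_eq_sum_eigenvalues hH
  have h4 : mfrob (P * M) = ∑ i ∈ Finset.univ.filter (fun i : Fin (I n) => (i : ℕ) < Rn),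
      σn i ^ 2 := by
    rw [mfrob_eq_trace, trace_proj P hsym hidem M, htracePS, sum_filter_lt hRn]
    exact Finset.sum_congr rfl fun r _ => (he (Fin.castLE hRn r)).symm
  have hfe : Finset.univ.filter (fun i : Fin (I n) => ¬ (i : ℕ) < Rn)
      = Finset.univ.filter (fun i : Fin (I n) => Rn ≤ (i : ℕ)) := by
    ext i; simp [not_lt]
  have h5 : (∑ i ∈ Finset.univ.filter (fun i : Fin (I n) => (i : ℕ) < Rn), σn i ^ 2)
      + (∑ i ∈ Finset.univ.filter (fun i : Fin (I n) => Rn ≤ (i : ℕ)), σn i ^ 2)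
      = ∑ i, σn i ^ 2 := by
    rw [← hfe]
    exact Finset.sum_filter_add_sum_filter_not Finset.univ _ _
  have h6 : ∑ i, σn i ^ 2 = ∑ j, lam j := by
    rw [← Equiv.sum_comp e lam]
    exact Finset.sum_congr rfl fun i _ => he i
  rw [h1]
  linarith

section proj

variable {E : Type*} [NormedAddCommGroup E] [InnerProductSpace ℝ E] {d : ℕ}

lemma proj_sub_sq (w : Fin d → E)
    (hw : ∀ l l', (inner ℝ (w l) (w l') : ℝ) = if l = l' then 1 else 0) (x : E) :
    (inner ℝ (x - ∑ l, (inner ℝ (w l) x : ℝ) • w l)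
        (x - ∑ l, (inner ℝ (w l) x : ℝ) • w l) : ℝ)
      = (inner ℝ x x : ℝ) - ∑ l, (inner ℝ (w l) x : ℝ) ^ 2 := by
  set Q : E := ∑ l, (inner ℝ (w l) x : ℝ) • w l with hQ
  have hxQ : (inner ℝ x Q : ℝ) = ∑ l, (inner ℝ (w l) x : ℝ) ^ 2 := by
    rw [hQ, inner_sum]
    refine Finset.sum_congr rfl fun l _ => ?_
    rw [real_inner_smul_right, sq, real_inner_comm]
  have hQx : (inner ℝ Q x : ℝ) = ∑ l, (inner ℝ (w l) x : ℝ) ^ 2 := by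
    rw [real_inner_comm]; exact hxQ
  have hQQ : (inner ℝ Q Q : ℝ) = ∑ l, (inner ℝ (w l) x : ℝ) ^ 2 := by
    rw [hQ, sum_inner]
    calc ∑ l, (inner ℝ ((inner ℝ (w l) x : ℝ) • w l) Q : ℝ)
        = ∑ l, (inner ℝ (w l) x : ℝ) * (inner ℝ (w l) Q : ℝ) := by
          exact Finset.sum_congr rfl fun l _ => real_inner_smul_left _ _ _
      _ = ∑ l, (inner ℝ (w l) x : ℝ) ^ 2 := by
          refine Finset.sum_congr rfl fun l _ => ?_
          rw [hQ, inner_sum]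
          have : ∀ l', (inner ℝ (w l) ((inner ℝ (w l') x : ℝ) • w l') : ℝ)
              = (inner ℝ (w l') x : ℝ) * if l = l' then 1 else 0 := by
            intro l'
            rw [real_inner_smul_right, hw l l']
          rw [Finset.sum_congr rfl fun l' _ => this l']
          rw [Finset.sum_mul_boole]
          simp [sq]
  rw [inner_sub_sub_self, hxQ, hQx, hQQ]
  ring

lemma bessel_sub_nonneg (w : Fin d → E)
    (hw : ∀ l l', (inner ℝ (w l) (w l') : ℝ) = if l = l' then 1 else 0) (x : E) :
    0 ≤ (inner ℝ x x : ℝ) - ∑ l, (inner ℝ (w l) x : ℝ) ^ 2 := by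
  rw [← proj_sub_sq w hw x]
  exact real_inner_self_nonneg

lemma proj_lower (w : Fin d → E)
    (hw : ∀ l l', (inner ℝ (w l) (w l') : ℝ) = if l = l' then 1 else 0) (x v : E)
    (hv : v ∈ Submodule.span ℝ (Set.range w)) :
    (inner ℝ x x : ℝ) - ∑ l, (inner ℝ (w l) x : ℝ) ^ 2 ≤ (inner ℝ (x - v) (x - v) : ℝ) := by
  set Q : E := ∑ l, (inner ℝ (w l) x : ℝ) • w l with hQdef
  have hQmem : Q ∈ Submodule.span ℝ (Set.range w) :=
    Submodule.sum_mem _ fun l _ =>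
      Submodule.smul_mem _ _ (Submodule.subset_span (Set.mem_range_self l))
  have horth : ∀ z ∈ Submodule.span ℝ (Set.range w), (inner ℝ (x - Q) z : ℝ) = 0 := by
    intro z hz
    induction hz using Submodule.span_induction with
    | mem z hz =>
        obtain ⟨l, rfl⟩ := hz
        rw [inner_sub_left, hQdef, sum_inner]
        have : ∀ l', (inner ℝ ((inner ℝ (w l') x : ℝ) • w l') (w l) : ℝ)
            = (inner ℝ (w l') x : ℝ) * if l = l' then 1 else 0 := fun l' => by
          rw [real_inner_smul_left, hw l' l]
          simp [eq_comm]
        rw [Finset.sum_congr rfl fun l' _ => this l', Finset.sum_mul_boole]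
        simp [real_inner_comm]
    | zero => simp
    | add a b _ _ ha hb => rw [inner_add_right, ha, hb]; ring
    | smul c a _ ha => rw [real_inner_smul_right, ha]; ring
  have hsplit : x - v = (x - Q) + (Q - v) := by abel
  have hmid : (inner ℝ (x - Q) (Q - v) : ℝ) = 0 :=
    horth _ (Submodule.sub_mem _ hQmem hv)
  have hlast : 0 ≤ (inner ℝ (Q - v) (Q - v) : ℝ) := real_inner_self_nonneg
  have hexp : (inner ℝ (x - v) (x - v) : ℝ)
      = (inner ℝ (x - Q) (x - Q) : ℝ) + 2 * (inner ℝ (x - Q) (Q - v) : ℝ)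
        + (inner ℝ (Q - v) (Q - v) : ℝ) := by
    rw [hsplit, real_inner_add_add_self]
  rw [← proj_sub_sq w hw x, ← hQdef]
  rw [hexp, hmid]
  linarith

end proj

/-- Ky Fan type bound. -/
lemma kyfan {k Rn : ℕ} (σn : Fin k → ℝ) (hpos : ∀ i, 0 ≤ σn i) (hanti : Antitone σn)
    (lam : Fin k → ℝ) (e : Equiv.Perm (Fin k)) (he : ∀ i, σn i ^ 2 = lam (e i))
    (t : Fin k → ℝ) (ht0 : ∀ j, 0 ≤ t j) (ht1 : ∀ j, t j ≤ 1) (hts : ∑ j, t j ≤ (Rn : ℝ)) :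
    ∑ j, lam j * t j ≤ ∑ i ∈ Finset.univ.filter (fun i : Fin k => (i : ℕ) < Rn), σn i ^ 2 := by
  have hre : ∑ j, lam j * t j = ∑ i, σn i ^ 2 * t (e i) := by
    rw [← Equiv.sum_comp e (fun j => lam j * t j)]
    exact Finset.sum_congr rfl fun i _ => by rw [he i]
  rw [hre]
  have hsum_te : ∑ i, t (e i) = ∑ j, t j := Equiv.sum_comp e t
  by_cases hk : k ≤ Rn
  · have : Finset.univ.filter (fun i : Fin k => (i : ℕ) < Rn) = Finset.univ := by
      ext i; simp [lt_of_lt_of_le i.2 hk]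
    rw [this]
    refine Finset.sum_le_sum fun i _ => ?_
    have := ht1 (e i)
    nlinarith [sq_nonneg (σn i), ht0 (e i)]
  · push_neg at hk
    set c : ℝ := σn ⟨Rn, hk⟩ ^ 2 with hc
    have hcnn : 0 ≤ c := sq_nonneg _
    have hcard : (Finset.univ.filter (fun i : Fin k => (i : ℕ) < Rn)).card = Rn := by
      rw [← map_castLE_eq_filter (le_of_lt hk), Finset.card_map, Finset.card_univ,
        Fintype.card_fin]
    -- split the sum
    have hsplit := Finset.sum_filter_add_sum_filter_not Finset.univ
      (fun i : Fin k => (i : ℕ) < Rn) (fun i => σn i ^ 2 * t (e i))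
    have hsplit_t := Finset.sum_filter_add_sum_filter_not Finset.univ
      (fun i : Fin k => (i : ℕ) < Rn) (fun i => t (e i))
    have hhead : ∑ i ∈ Finset.univ.filter (fun i : Fin k => (i : ℕ) < Rn), σn i ^ 2 * t (e i)
        ≤ (∑ i ∈ Finset.univ.filter (fun i : Fin k => (i : ℕ) < Rn), σn i ^ 2)
          - c * (∑ i ∈ Finset.univ.filter (fun i : Fin k => (i : ℕ) < Rn), (1 - t (e i))) := by
      rw [Finset.mul_sum, ← Finset.sum_sub_distrib]
      refine Finset.sum_le_sum fun i hi => ?_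
      have hiRn : (i : ℕ) < Rn := (Finset.mem_filter.mp hi).2
      have hle : c ≤ σn i ^ 2 := by
        have h1 : σn ⟨Rn, hk⟩ ≤ σn i := hanti (by simp [Fin.le_def, le_of_lt hiRn])
        have h2 : 0 ≤ σn ⟨Rn, hk⟩ := hpos _
        nlinarith
      have h1t : 0 ≤ 1 - t (e i) := by linarith [ht1 (e i)]
      nlinarith
    have htail : ∑ i ∈ Finset.univ.filter (fun i : Fin k => ¬ (i : ℕ) < Rn), σn i ^ 2 * t (e i)
        ≤ c * ∑ i ∈ Finset.univ.filter (fun i : Fin k => ¬ (i : ℕ) < Rn), t (e i) := by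
      rw [Finset.mul_sum]
      refine Finset.sum_le_sum fun i hi => ?_
      have hiRn : ¬ (i : ℕ) < Rn := (Finset.mem_filter.mp hi).2
      have hle : σn i ^ 2 ≤ c := by
        have h1 : σn i ≤ σn ⟨Rn, hk⟩ := hanti (by simp [Fin.le_def, le_of_not_gt hiRn])
        have h2 : 0 ≤ σn i := hpos _
        nlinarith
      nlinarith [ht0 (e i)]
    -- combine
    have hbal : c * (∑ i ∈ Finset.univ.filter (fun i : Fin k => ¬ (i : ℕ) < Rn), t (e i))
        - c * (∑ i ∈ Finset.univ.filter (fun i : Fin k => (i : ℕ) < Rn), (1 - t (e i))) ≤ 0 := by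
      have h1 : ∑ i ∈ Finset.univ.filter (fun i : Fin k => (i : ℕ) < Rn), (1 - t (e i))
          = (Rn : ℝ) - ∑ i ∈ Finset.univ.filter (fun i : Fin k => (i : ℕ) < Rn), t (e i) := by
        rw [Finset.sum_sub_distrib, Finset.sum_const, hcard]
        simp
      have h2 : ∑ i ∈ Finset.univ.filter (fun i : Fin k => ¬ (i : ℕ) < Rn), t (e i)
          = (∑ j, t j) - ∑ i ∈ Finset.univ.filter (fun i : Fin k => (i : ℕ) < Rn), t (e i) := by
        rw [← hsum_te, ← hsplit_t]; ring
      rw [h1, h2]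
      have : (∑ j, t j) - (Rn : ℝ) ≤ 0 := by linarith
      calc c * ((∑ j, t j) - ∑ i ∈ Finset.univ.filter (fun i : Fin k => (i : ℕ) < Rn), t (e i))
            - c * ((Rn : ℝ) - ∑ i ∈ Finset.univ.filter (fun i : Fin k => (i : ℕ) < Rn), t (e i))
          = c * ((∑ j, t j) - (Rn : ℝ)) := by ring
        _ ≤ 0 := mul_nonpos_of_nonneg_of_nonpos hcnn this
    linarith [hsplit]

lemma tucker_unfold {R : Fin N → ℕ} (G : (∀ k, Fin (R k)) → ℝ)
    (A : ∀ n, Matrix (Fin (I n)) (Fin (R n)) ℝ) (n : Fin N) :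
    modeUnfold (tucker G A) n = A n * (Matrix.of fun r j =>
      ∑ jj : ∀ m : {m : Fin N // m ≠ n}, Fin (R m.1),
        G (fullIdx n r jj) * ∏ m : {m : Fin N // m ≠ n}, A m.1 (j m) (jj m)) := by
  funext i j
  show tucker G A (fullIdx n i j) = _
  rw [tucker, sum_idx (I := R) n, Matrix.mul_apply]
  refine Finset.sum_congr rfl fun r _ => ?_
  rw [Matrix.of_apply, Finset.mul_sum]
  refine Finset.sum_congr rfl fun jj _ => ?_
  have hprod : ∏ k, A k (fullIdx n i j k) (fullIdx (I := R) n r jj k)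
      = A n i r * ∏ m : {m : Fin N // m ≠ n}, A m.1 (j m) (jj m) := by
    rw [← Finset.mul_prod_erase Finset.univ _ (Finset.mem_univ n), fullIdx_same, fullIdx_same]
    congr 1
    rw [Finset.prod_subtype (Finset.univ.erase n)
      (fun x => by simp : ∀ x, x ∈ Finset.univ.erase n ↔ x ≠ n)
      (fun k => A k (fullIdx n i j k) (fullIdx (I := R) n r jj k))]
    exact Finset.prod_congr rfl fun m _ => by
      rw [fullIdx_ne n i j m, fullIdx_ne (I := R) n r jj m]
  rw [hprod]
  ring

lemma euclid_inner_eq {k : ℕ} (x y : EuclideanSpace ℝ (Fin k)) :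
    (inner ℝ x y : ℝ) = ∑ a, x a * y a := by
  simp [PiLp.inner_apply, RCLike.inner_apply, starRingEnd_apply]
  exact Finset.sum_congr rfl fun _ _ => mul_comm _ _

lemma eckart_lower {k : ℕ} {c : Type*} [Fintype c] (M : Matrix (Fin k) c ℝ)
    (σn : Fin k → ℝ) (hpos : ∀ i, 0 ≤ σn i) (hanti : Antitone σn)
    (e : Equiv.Perm (Fin k))
    (he : ∀ i, σn i ^ 2 = (Matrix.isHermitian_mul_conjTranspose_self M).eigenvalues (e i))
    (Rn : ℕ) (B : Matrix (Fin k) (Fin Rn) ℝ) (W : Matrix (Fin Rn) c ℝ) :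
    ∑ i ∈ Finset.univ.filter (fun i : Fin k => Rn ≤ (i : ℕ)), σn i ^ 2
      ≤ mfrob (M - B * W) := by
  classical
  set hH := Matrix.isHermitian_mul_conjTranspose_self M with hHdef
  set u := hH.eigenvectorBasis with hu
  set lam := hH.eigenvalues with hlam
  have hMS : M * Mᴴ = M * Mᵀ := by
    rw [Matrix.conjTranspose_eq_transpose_of_trivial]
  -- the subspace spanned by the columns of B
  set colB : Fin Rn → EuclideanSpace ℝ (Fin k) := fun r => WithLp.toLp 2 (fun a => B a r) with hcolB
  set V : Submodule ℝ (EuclideanSpace ℝ (Fin k)) := Submodule.span ℝ (Set.range colB) with hV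
  set d : ℕ := Module.finrank ℝ V with hd
  have hdRn : d ≤ Rn := by
    have h1 : Set.finrank ℝ (Set.range colB) ≤ Fintype.card (Fin Rn) :=
      finrank_range_le_card colB
    simpa [Set.finrank, Fintype.card_fin] using h1
  set ob : OrthonormalBasis (Fin d) ℝ V := stdOrthonormalBasis ℝ V with hob
  set w : Fin d → EuclideanSpace ℝ (Fin k) := fun l => (ob l : EuclideanSpace ℝ (Fin k)) with hwdef
  have hw : ∀ l l', (inner ℝ (w l) (w l') : ℝ) = if l = l' then 1 else 0 := by
    intro l l'
    rw [hwdef, ← Submodule.coe_inner]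
    exact orthonormal_iff_ite.mp ob.orthonormal l l'
  have hVw : V ≤ Submodule.span ℝ (Set.range w) := by
    intro x hx
    have hx2 := ob.sum_repr ⟨x, hx⟩
    have hx3 : x = ∑ l, ob.repr ⟨x, hx⟩ l • w l := by
      calc x = ((⟨x, hx⟩ : V) : EuclideanSpace ℝ (Fin k)) := rfl
        _ = ((∑ l, ob.repr ⟨x, hx⟩ l • ob l : V) : EuclideanSpace ℝ (Fin k)) := by
            rw [hx2]
        _ = ∑ l, ob.repr ⟨x, hx⟩ l • w l := by
            push_cast
            rfl
    rw [hx3]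
    exact Submodule.sum_mem _ fun l _ =>
      Submodule.smul_mem _ _ (Submodule.subset_span (Set.mem_range_self l))
  -- columns
  set xc : c → EuclideanSpace ℝ (Fin k) := fun j => WithLp.toLp 2 (fun a => M a j) with hxc
  set vc : c → EuclideanSpace ℝ (Fin k) := fun j => WithLp.toLp 2 (fun a => (B * W) a j) with hvc
  have hvmem : ∀ j, vc j ∈ Submodule.span ℝ (Set.range w) := by
    intro j
    have : vc j = ∑ r, W r j • colB r := by
      ext a
      simp [hvc, hcolB, Matrix.mul_apply, mul_comm]
    rw [this]
    exact Submodule.sum_mem _ fun r _ => Submodule.smul_mem _ _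
      (hVw (Submodule.subset_span (Set.mem_range_self r)))
  -- key per-column bound
  have hcolbound : ∀ j, (inner ℝ (xc j) (xc j) : ℝ) - ∑ l, (inner ℝ (w l) (xc j) : ℝ) ^ 2
      ≤ (inner ℝ (xc j - vc j) (xc j - vc j) : ℝ) :=
    fun j => proj_lower w hw (xc j) (vc j) (hvmem j)
  -- identification of mfrob with the column sums
  have hmf : mfrob (M - B * W) = ∑ j, (inner ℝ (xc j - vc j) (xc j - vc j) : ℝ) := by
    rw [mfrob, Finset.sum_comm]
    refine Finset.sum_congr rfl fun j _ => ?_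
    rw [euclid_inner_eq]
    refine Finset.sum_congr rfl fun a _ => ?_
    have : (xc j - vc j) a = M a j - (B * W) a j := rfl
    rw [this, Matrix.sub_apply, sq]
  have hS1 : ∑ j, (inner ℝ (xc j) (xc j) : ℝ) = ∑ q, lam q := by
    have h1 : ∑ j, (inner ℝ (xc j) (xc j) : ℝ) = mfrob M := by
      rw [mfrob, Finset.sum_comm]
      refine Finset.sum_congr rfl fun j _ => ?_
      rw [euclid_inner_eq]
      exact Finset.sum_congr rfl fun a _ => (sq (M a j)) ▸ rfl
    rw [h1, mfrob_eq_trace, ← hMS]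
    exact trace_eq_sum_eigenvalues hH
  -- weights
  set t : Fin k → ℝ := fun q => ∑ l, (∑ a, u q a * w l a) ^ 2 with ht
  have hS2 : ∀ l, ∑ j, (inner ℝ (w l) (xc j) : ℝ) ^ 2
      = ∑ q, lam q * (∑ a, u q a * w l a) ^ 2 := by
    intro l
    have h1 : ∑ j, (inner ℝ (w l) (xc j) : ℝ) ^ 2
        = ∑ a, ∑ b, w l a * (M * Mᴴ) a b * w l b := by
      calc ∑ j, (inner ℝ (w l) (xc j) : ℝ) ^ 2
          = ∑ j, ∑ a, ∑ b, (w l a * M a j) * (w l b * M b j) := by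
            refine Finset.sum_congr rfl fun j _ => ?_
            rw [euclid_inner_eq, sq, Finset.sum_mul_sum]
        _ = ∑ a, ∑ j, ∑ b, (w l a * M a j) * (w l b * M b j) := Finset.sum_comm
        _ = ∑ a, ∑ b, ∑ j, (w l a * M a j) * (w l b * M b j) :=
            Finset.sum_congr rfl fun _ _ => Finset.sum_comm
        _ = ∑ a, ∑ b, w l a * (M * Mᴴ) a b * w l b := by
            refine Finset.sum_congr rfl fun a _ => Finset.sum_congr rfl fun b _ => ?_
            rw [Matrix.mul_apply, Finset.mul_sum, Finset.sum_mul]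
            refine Finset.sum_congr rfl fun j _ => ?_
            rw [Matrix.conjTranspose_apply, star_trivial]
            ring
    rw [h1, quad_form hH (w l)]
  have ht0 : ∀ q, 0 ≤ t q := fun q => Finset.sum_nonneg fun l _ => sq_nonneg _
  have ht1 : ∀ q, t q ≤ 1 := by
    intro q
    have hb := bessel_sub_nonneg w hw (u q)
    have huq : (inner ℝ (u q) (u q) : ℝ) = 1 := by
      rw [euclid_inner_eq]
      rw [onb_sums hH q q]
      simp
    have heq : ∑ l, (inner ℝ (w l) (u q) : ℝ) ^ 2 = t q := by
      refine Finset.sum_congr rfl fun l _ => ?_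
      rw [euclid_inner_eq]
      rw [show ∑ a, w l a * u q a = ∑ a, u q a * w l a from
        Finset.sum_congr rfl fun a _ => mul_comm _ _]
    rw [huq, heq] at hb
    linarith
  have hts : ∑ q, t q ≤ (Rn : ℝ) := by
    have h1 : ∑ q, t q = ∑ l : Fin d, ∑ q, (∑ a, u q a * w l a) ^ 2 := Finset.sum_comm
    have h2 : ∀ l, ∑ q, (∑ a, u q a * w l a) ^ 2 = 1 := by
      intro l
      have hp := u.sum_inner_mul_inner (w l) (w l)
      have : ∀ q, (inner ℝ (w l) (u q) : ℝ) * (inner ℝ (u q) (w l) : ℝ)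
          = (∑ a, u q a * w l a) ^ 2 := by
        intro q
        rw [euclid_inner_eq, euclid_inner_eq, sq]
        rw [show ∑ a, w l a * u q a = ∑ a, u q a * w l a from
          Finset.sum_congr rfl fun a _ => mul_comm _ _]
      rw [← Finset.sum_congr rfl fun q _ => this q, hp, hw l l, if_pos rfl]
    rw [h1, Finset.sum_congr rfl fun l _ => h2 l, Finset.sum_const, Finset.card_univ,
      Fintype.card_fin, nsmul_eq_mul, mul_one]
    exact_mod_cast hdRn
  have hkf : ∑ q, lam q * t q
      ≤ ∑ i ∈ Finset.univ.filter (fun i : Fin k => (i : ℕ) < Rn), σn i ^ 2 :=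
    kyfan σn hpos hanti lam e he t ht0 ht1 hts
  -- put everything together
  have hchain : ∑ q, lam q - ∑ q, lam q * t q ≤ mfrob (M - B * W) := by
    rw [hmf]
    have h1 : ∑ j, ((inner ℝ (xc j) (xc j) : ℝ) - ∑ l, (inner ℝ (w l) (xc j) : ℝ) ^ 2)
        ≤ ∑ j, (inner ℝ (xc j - vc j) (xc j - vc j) : ℝ) :=
      Finset.sum_le_sum fun j _ => hcolbound j
    have h2 : ∑ j, ((inner ℝ (xc j) (xc j) : ℝ) - ∑ l, (inner ℝ (w l) (xc j) : ℝ) ^ 2)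
        = ∑ q, lam q - ∑ q, lam q * t q := by
      rw [Finset.sum_sub_distrib, hS1]
      congr 1
      rw [Finset.sum_comm, Finset.sum_congr rfl fun l _ => hS2 l, Finset.sum_comm]
      refine Finset.sum_congr rfl fun q _ => ?_
      rw [ht, Finset.mul_sum]
    linarith
  have hfe : Finset.univ.filter (fun i : Fin k => ¬ (i : ℕ) < Rn)
      = Finset.univ.filter (fun i : Fin k => Rn ≤ (i : ℕ)) := by
    ext i; simp [not_lt]
  have h5 : (∑ i ∈ Finset.univ.filter (fun i : Fin k => (i : ℕ) < Rn), σn i ^ 2)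
      + (∑ i ∈ Finset.univ.filter (fun i : Fin k => Rn ≤ (i : ℕ)), σn i ^ 2)
      = ∑ i, σn i ^ 2 := by
    rw [← hfe]
    exact Finset.sum_filter_add_sum_filter_not Finset.univ _ _
  have h6 : ∑ i, σn i ^ 2 = ∑ q, lam q := by
    rw [← Equiv.sum_comp e lam]
    exact Finset.sum_congr rfl fun i _ => he i
  linarith

/-- **Sandwich bound** -/
theorem sandwich_loss {N : ℕ} {I : Fin N → ℕ} (hI : ∀ n, 1 ≤ I n)
    (X : (∀ k, Fin (I k)) → ℝ)
    (σ : ∀ n, Fin (I n) → ℝ) (hσ : ∀ n, IsSingularValues (modeUnfold X n) (σ n))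
    (R : Fin N → ℕ) (hR : ∀ n, 1 ≤ R n ∧ R n ≤ I n) :
    (1 / (N : ℝ)) * surrLoss σ R ≤ tuckerLoss I X R ∧
      tuckerLoss I X R ≤ surrLoss σ R := by
  classical
  have hne : {v : ℝ | ∃ (G : (∀ k, Fin (R k)) → ℝ)
      (A : ∀ n, Matrix (Fin (I n)) (Fin (R n)) ℝ),
      v = frobSq (fun i => X i - tucker G A i)}.Nonempty :=
    ⟨_, (fun _ => 0), (fun _ => 0), rfl⟩
  have hbdd : BddBelow {v : ℝ | ∃ (G : (∀ k, Fin (R k)) → ℝ)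
      (A : ∀ n, Matrix (Fin (I n)) (Fin (R n)) ℝ),
      v = frobSq (fun i => X i - tucker G A i)} := by
    refine ⟨0, ?_⟩
    rintro v ⟨G, A, rfl⟩
    exact frobSq_nonneg _
  -- tail of mode n
  have hlow : ∀ n : Fin N,
      (∑ i ∈ Finset.univ.filter (fun i : Fin (I n) => R n ≤ (i : ℕ)), σ n i ^ 2)
        ≤ tuckerLoss I X R := by
    intro n
    refine le_csInf hne ?_
    rintro v ⟨G, A, rfl⟩
    obtain ⟨hpos, hanti, e, he⟩ := hσ n
    have hunf := tucker_unfold G A n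
    have hval : frobSq (fun i => X i - tucker G A i)
        = mfrob (modeUnfold X n - A n * (Matrix.of fun r j =>
            ∑ jj : ∀ m : {m : Fin N // m ≠ n}, Fin (R m.1),
              G (fullIdx n r jj) * ∏ m : {m : Fin N // m ≠ n}, A m.1 (j m) (jj m))) := by
      rw [frobSq_unfold n, modeUnfold_sub, hunf]
    rw [hval]
    exact eckart_lower (modeUnfold X n) (σ n) hpos hanti e he (R n) (A n) _
  have hLnonneg : 0 ≤ tuckerLoss I X R :=
    le_csInf hne (by rintro v ⟨G, A, rfl⟩; exact frobSq_nonneg _)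
  constructor
  · -- lower bound
    by_cases hN : N = 0
    · subst hN
      have : surrLoss σ R = 0 := by simp [surrLoss]
      rw [this, mul_zero]
      exact hLnonneg
    · have hN0 : (0 : ℝ) < N := by
        exact_mod_cast Nat.pos_of_ne_zero hN
      have hsum : surrLoss σ R ≤ (N : ℝ) * tuckerLoss I X R := by
        calc surrLoss σ R
            ≤ ∑ _n : Fin N, tuckerLoss I X R := Finset.sum_le_sum fun n _ => hlow n
          _ = (N : ℝ) * tuckerLoss I X R := by
              rw [Finset.sum_const, Finset.card_univ, Fintype.card_fin, nsmul_eq_mul]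
      rw [one_div_mul_eq_div, div_le_iff₀ hN0]
      linarith
  · -- upper bound
    have hex : ∀ n : Fin N, ∃ A : Matrix (Fin (I n)) (Fin (R n)) ℝ,
        (A * Aᵀ)ᵀ = A * Aᵀ ∧ (A * Aᵀ) * (A * Aᵀ) = A * Aᵀ ∧
        frobSq (fun i => X i - modeProd n (A * Aᵀ) X i)
          = ∑ i ∈ Finset.univ.filter (fun i : Fin (I n) => R n ≤ (i : ℕ)), σ n i ^ 2 := by
      intro n
      obtain ⟨hpos, hanti, e, he⟩ := hσ n
      exact mode_upper n X (σ n) hpos e he (R n) (hR n).2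
    choose A hA1 hA2 hA3 using hex
    set P : ∀ n, Matrix (Fin (I n)) (Fin (I n)) ℝ := fun n => A n * (A n)ᵀ with hPdef
    set G : (∀ k, Fin (R k)) → ℝ :=
      fun j => ∑ g : ∀ k, Fin (I k), X g * ∏ n, A n (g n) (j n) with hGdef
    have hstep1 : tuckerLoss I X R ≤ frobSq (fun i => X i - tucker G A i) :=
      csInf_le hbdd ⟨G, A, rfl⟩
    have hstep2 : tucker G A = phiList P (List.finRange N) X := by
      rw [hGdef, tucker_hosvd A X, ← phiList_eq_kerApply P _ (List.nodup_finRange N) X]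
    have hstep3 : frobSq (fun i => X i - phiList P (List.finRange N) X i)
        ≤ ((List.finRange N).map
            (fun n => frobSq (fun i => X i - modeProd n (P n) X i))).sum :=
      err_bound P hA1 hA2 X (List.finRange N)
    have hstep4 : ((List.finRange N).map
        (fun n => frobSq (fun i => X i - modeProd n (P n) X i))).sum = surrLoss σ R := by
      rw [← Fin.sum_univ_def]
      exact Finset.sum_congr rfl fun n _ => hA3 n
    calc tuckerLoss I X R ≤ frobSq (fun i => X i - tucker G A i) := hstep1
      _ = frobSq (fun i => X i - phiList P (List.finRange N) X i) := by rw [hstep2]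
      _ ≤ _ := hstep3
      _ = surrLoss σ R := hstep4
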